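/- Define operators S_0, S_1 on ℓ²(ℤ) by S_0 e_n = (e_{1+2n} + e_{2+2n})/√2 and S_1 e_n = (−e_{1+2n} + e_{2+2n})/√2. Then the closed subspaces H_+ = closed span{e_n : n ≥ −1} and H_− = closed span{e_n : n ≤ −2} are both invariant under S_0, S_1, S_0*, and S_1*. -/

import Mathlib

open ContinuousLinearMap

noncomputable abbrev ell2Z : Type := lp (fun _ : ℤ => ℂ) 2

/-- The standard orthonormal basis vector `e n` of `ℓ²(ℤ)`. -/
noncomputable def e (n : ℤ) : ell2Z := lp.single 2 n (1 : ℂ)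

/-- The closed span of `{e n : n ≥ -1}`. -/
noncomputable def Hplus : Submodule ℂ ell2Z :=
  (Submodule.span ℂ {x : ell2Z | ∃ n : ℤ, -1 ≤ n ∧ x = e n}).topologicalClosure

/-- The closed span of `{e n : n ≤ -2}`. -/
noncomputable def Hminus : Submodule ℂ ell2Z :=
  (Submodule.span ℂ {x : ell2Z | ∃ n : ℤ, n ≤ -2 ∧ x = e n}).topologicalClosure

noncomputable def B : HilbertBasis ℤ ℂ ell2Z :=
  HilbertBasis.ofRepr (LinearIsometryEquiv.refl ℂ _)

lemma B_apply (n : ℤ) : B n = e n := by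
  rw [← B.repr_symm_single]; rfl

lemma inner_e (i j : ℤ) : (inner ℂ (e i) (e j) : ℂ) = if i = j then 1 else 0 := by
  rw [e, e, lp.inner_single_left, lp.single_apply]
  simp [eq_comm, Pi.single_apply]

lemma ext_basis {x y : ell2Z} (h : ∀ k : ℤ, (inner ℂ (e k) x : ℂ) = inner ℂ (e k) y) :
    x = y := by
  have : B.repr x = B.repr y := by
    ext k
    rw [B.repr_apply_apply, B.repr_apply_apply, B_apply]
    exact h k
  exact B.repr.injective this

lemma adjoint_apply_e (S : ell2Z →L[ℂ] ell2Z) (a : ℂ)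
    (hS : ∀ n : ℤ, S (e n) = (Real.sqrt 2 : ℂ)⁻¹ • (a • e (1 + 2 * n) + e (2 + 2 * n)))
    (m : ℤ) :
    ∃ n : ℤ, ∃ d : ℂ, adjoint S (e m) = d • e n ∧ (m = 1 + 2 * n ∨ m = 2 + 2 * n) := by
  rcases Int.even_or_odd m with ⟨n', hn'⟩ | ⟨n', hn'⟩
  · -- m even : m = 2 + 2*(n'-1)
    have hm : m = 2 + 2 * (n' - 1) := by omega
    refine ⟨n' - 1, (starRingEnd ℂ) ((Real.sqrt 2 : ℂ))⁻¹, ?_, Or.inr hm⟩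
    apply ext_basis
    intro k
    rw [adjoint_inner_right, hS, inner_smul_left, inner_add_left, inner_smul_left,
      inner_smul_right, inner_e, inner_e, inner_e, hm]
    split_ifs <;> first | ring1 | (exfalso; omega)
  · -- m odd : m = 1 + 2*n'
    have hm : m = 1 + 2 * n' := by omega
    refine ⟨n', (starRingEnd ℂ) ((Real.sqrt 2 : ℂ))⁻¹ * (starRingEnd ℂ) a, ?_, Or.inl hm⟩
    apply ext_basis
    intro k
    rw [adjoint_inner_right, hS, inner_smul_left, inner_add_left, inner_smul_left,
      inner_smul_right, inner_e, inner_e, inner_e, hm]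
    split_ifs <;> first | ring1 | (exfalso; omega)

lemma maps_closure {T : ell2Z →L[ℂ] ell2Z} {s : Set ell2Z}
    (h : ∀ x ∈ s, T x ∈ (Submodule.span ℂ s).topologicalClosure) :
    ∀ ξ ∈ (Submodule.span ℂ s).topologicalClosure,
      T ξ ∈ (Submodule.span ℂ s).topologicalClosure := by
  intro ξ hξ
  have hle : (Submodule.span ℂ s).topologicalClosure ≤
      ((Submodule.span ℂ s).topologicalClosure).comap (T : ell2Z →ₗ[ℂ] ell2Z) := by
    apply Submodule.topologicalClosure_minimal
    · exact Submodule.span_le.2 h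
    · exact (Submodule.isClosed_topologicalClosure _).preimage T.continuous
  exact hle hξ

theorem stmt_15 (S₀ S₁ : ell2Z →L[ℂ] ell2Z)
    (hS₀ : ∀ n : ℤ, S₀ (e n) = (Real.sqrt 2 : ℂ)⁻¹ • (e (1 + 2 * n) + e (2 + 2 * n)))
    (hS₁ : ∀ n : ℤ, S₁ (e n) = (Real.sqrt 2 : ℂ)⁻¹ • (-e (1 + 2 * n) + e (2 + 2 * n))) :
    (∀ ξ ∈ Hplus, S₀ ξ ∈ Hplus ∧ S₁ ξ ∈ Hplus ∧
      adjoint S₀ ξ ∈ Hplus ∧ adjoint S₁ ξ ∈ Hplus) ∧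
    (∀ ξ ∈ Hminus, S₀ ξ ∈ Hminus ∧ S₁ ξ ∈ Hminus ∧
      adjoint S₀ ξ ∈ Hminus ∧ adjoint S₁ ξ ∈ Hminus) := by
  have hS₀' : ∀ n : ℤ, S₀ (e n) =
      (Real.sqrt 2 : ℂ)⁻¹ • ((1 : ℂ) • e (1 + 2 * n) + e (2 + 2 * n)) := by
    intro n; simpa using hS₀ n
  have hS₁' : ∀ n : ℤ, S₁ (e n) =
      (Real.sqrt 2 : ℂ)⁻¹ • ((-1 : ℂ) • e (1 + 2 * n) + e (2 + 2 * n)) := by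
    intro n; simpa [neg_one_smul] using hS₁ n
  have hP : ∀ n : ℤ, -1 ≤ n → e n ∈ Hplus := fun n hn =>
    Submodule.le_topologicalClosure _ (Submodule.subset_span ⟨n, hn, rfl⟩)
  have hM : ∀ n : ℤ, n ≤ -2 → e n ∈ Hminus := fun n hn =>
    Submodule.le_topologicalClosure _ (Submodule.subset_span ⟨n, hn, rfl⟩)
  constructor
  · intro ξ hξ
    refine ⟨?_, ?_, ?_, ?_⟩ <;> refine maps_closure ?_ ξ hξ <;>
      rintro x ⟨n, hn, rfl⟩
    · rw [hS₀ n]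
      exact Submodule.smul_mem _ _ (Submodule.add_mem _
        (hP _ (by omega)) (hP _ (by omega)))
    · rw [hS₁ n]
      exact Submodule.smul_mem _ _ (Submodule.add_mem _
        (Submodule.neg_mem _ (hP _ (by omega))) (hP _ (by omega)))
    · obtain ⟨n', d, hEq, hc⟩ := adjoint_apply_e S₀ 1 hS₀' n
      rw [hEq]
      exact Submodule.smul_mem _ _ (hP _ (by omega))
    · obtain ⟨n', d, hEq, hc⟩ := adjoint_apply_e S₁ (-1) hS₁' n
      rw [hEq]
      exact Submodule.smul_mem _ _ (hP _ (by omega))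
  · intro ξ hξ
    refine ⟨?_, ?_, ?_, ?_⟩ <;> refine maps_closure ?_ ξ hξ <;>
      rintro x ⟨n, hn, rfl⟩
    · rw [hS₀ n]
      exact Submodule.smul_mem _ _ (Submodule.add_mem _
        (hM _ (by omega)) (hM _ (by omega)))
    · rw [hS₁ n]
      exact Submodule.smul_mem _ _ (Submodule.add_mem _
        (Submodule.neg_mem _ (hM _ (by omega))) (hM _ (by omega)))
    · obtain ⟨n', d, hEq, hc⟩ := adjoint_apply_e S₀ 1 hS₀' n
      rw [hEq]
      exact Submodule.smul_mem _ _ (hM _ (by omega))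
    · obtain ⟨n', d, hEq, hc⟩ := adjoint_apply_e S₁ (-1) hS₁' n
      rw [hEq]
      exact Submodule.smul_mem _ _ (hM _ (by omega))
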